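/- Let 𝒮 be a compact metric space and P a Markov transition kernel on 𝒮 with the strong Feller property. Assume P is topologically irreducible: for every s ∈ 𝒮 and every nonempty open set O ⊆ 𝒮 there exists an integer n ≥ 1 with P^n(s, O) > 0, where P^n denotes the n-step kernel. Then any two invariant probability measures for P coincide. -/

import Mathlib

open MeasureTheory ENNReal

/-- The `n`-step kernel of a Markov transition kernel `P`: `kernelIter P 0 s = δ_s` and
`kernelIter P (n+1) s B = ∫ kernelIter P n s' B dP(s, ds')`, so that `kernelIter P 1 = P`
and `kernelIter P (n+1)(s, B) = ∫ (kernelIter P n)(s', B) P(s, ds')`. -/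
noncomputable def kernelIter {S : Type*} [MeasurableSpace S]
    (P : S → Measure S) : ℕ → S → Measure S
  | 0 => fun s => Measure.dirac s
  | n + 1 => fun s => (P s).bind (kernelIter P n)

section Aux

variable {S : Type*} [MeasurableSpace S]

lemma kernelIter_measurable (P : S → Measure S) (hP : Measurable P) :
    ∀ n, Measurable (kernelIter P n)
  | 0 => Measure.measurable_dirac
  | n + 1 => (Measure.measurable_bind' (kernelIter_measurable P hP n)).comp hP

lemma iter_invariant (P : S → Measure S) (hP : Measurable P)
    (μ : Measure S) (hμ : ∀ B : Set S, MeasurableSet B → μ B = ∫⁻ s, P s B ∂μ) :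
    ∀ n (B : Set S), MeasurableSet B → ∫⁻ s, kernelIter P n s B ∂μ = μ B := by
  have hbind : μ.bind P = μ := by
    refine Measure.ext fun B hB => ?_
    rw [Measure.bind_apply hB hP.aemeasurable]
    exact (hμ B hB).symm
  intro n
  induction n with
  | zero =>
    intro B hB
    calc ∫⁻ s, kernelIter P 0 s B ∂μ = ∫⁻ s, B.indicator 1 s ∂μ := by
          simp only [kernelIter]
          exact lintegral_congr fun s => Measure.dirac_apply' s hB
      _ = μ B := by rw [lintegral_indicator hB]; exact setLIntegral_one B
  | succ n ih =>
    intro B hB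
    have hQ := kernelIter_measurable P hP n
    calc ∫⁻ s, kernelIter P (n + 1) s B ∂μ
        = ∫⁻ s, ∫⁻ s', kernelIter P n s' B ∂(P s) ∂μ := by
          refine lintegral_congr fun s => ?_
          exact Measure.bind_apply hB hQ.aemeasurable
      _ = ∫⁻ s', kernelIter P n s' B ∂(μ.bind P) :=
          (Measure.lintegral_bind hP.aemeasurable ((Measure.measurable_coe hB).comp hQ).aemeasurable).symm
      _ = ∫⁻ s', kernelIter P n s' B ∂μ := by rw [hbind]
      _ = μ B := ih B hB

/-- Every nonzero finite invariant measure gives positive mass to every set reachable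
from every point. -/
lemma aux_support (P : S → Measure S) (hP : Measurable P)
    (μ : Measure S) [IsFiniteMeasure μ] (hμ0 : μ Set.univ ≠ 0)
    (hμ : ∀ B : Set S, MeasurableSet B → μ B = ∫⁻ s, P s B ∂μ)
    (O : Set S) (hO : MeasurableSet O)
    (hirrO : ∀ s, ∃ n : ℕ, 1 ≤ n ∧ 0 < kernelIter P n s O) :
    μ O ≠ 0 := by
  intro h0
  have hE : ∀ n, μ {s | kernelIter P n s O ≠ 0} = 0 := by
    intro n
    have h1 := iter_invariant P hP μ hμ n O hO
    rw [h0] at h1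
    have hmeas : Measurable fun s => kernelIter P n s O :=
      (Measure.measurable_coe hO).comp (kernelIter_measurable P hP n)
    have h2 := (lintegral_eq_zero_iff hmeas).mp h1
    simpa [Filter.EventuallyEq, ae_iff] using h2
  have huniv : (Set.univ : Set S) ⊆ ⋃ n, {s | kernelIter P n s O ≠ 0} := by
    intro s _
    obtain ⟨n, _, hn⟩ := hirrO s
    exact Set.mem_iUnion.mpr ⟨n, hn.ne'⟩
  have : μ Set.univ = 0 := by
    refine le_antisymm ?_ zero_le
    calc μ Set.univ ≤ μ (⋃ n, {s | kernelIter P n s O ≠ 0}) := measure_mono huniv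
      _ ≤ ∑' n, μ {s | kernelIter P n s O ≠ 0} := measure_iUnion_le _
      _ = 0 := by simp [hE]
  exact hμ0 this

lemma ennreal_eq_of_add {a b c d : ℝ≥0∞} (h1 : a ≤ b) (h2 : c ≤ d)
    (h : b + d = a + c) (hd : d ≠ ∞) : b = a := by
  refine le_antisymm ?_ h1
  have : b + d ≤ a + d := h.trans_le (add_le_add_right h2 a)
  exact (ENNReal.add_le_add_iff_right hd).mp this

/-- The "positive part" `μ.restrict A - ν.restrict A` of the difference of two invariant
measures (with respect to a Hahn set `A`) is again invariant. -/
lemma aux_pos (P : S → Measure S) (hP : Measurable P) [∀ s, IsProbabilityMeasure (P s)]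
    (μ ν : Measure S) [IsFiniteMeasure μ] [IsFiniteMeasure ν]
    (hμ : ∀ B : Set S, MeasurableSet B → μ B = ∫⁻ s, P s B ∂μ)
    (hν : ∀ B : Set S, MeasurableSet B → ν B = ∫⁻ s, P s B ∂ν)
    (A : Set S) (hA : MeasurableSet A)
    (hle : ν.restrict A ≤ μ.restrict A)
    (hle' : μ.restrict Aᶜ ≤ ν.restrict Aᶜ) :
    ∀ B : Set S, MeasurableSet B →
      (μ.restrict A - ν.restrict A) B = ∫⁻ s, P s B ∂(μ.restrict A - ν.restrict A) := by
  set ρ := μ.restrict A - ν.restrict A with hρdef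
  have hPB : ∀ (B : Set S), MeasurableSet B → Measurable fun s => P s B := fun B hB =>
    (Measure.measurable_coe hB).comp hP
  have hsum : ρ + ν.restrict A = μ.restrict A := Measure.sub_add_cancel_of_le hle
  have hint : ∀ f : S → ℝ≥0∞,
      ∫⁻ s in A, f s ∂μ = (∫⁻ s, f s ∂ρ) + ∫⁻ s in A, f s ∂ν := by
    intro f
    rw [← hsum, lintegral_add_measure]
  have hfinA : ∀ f : S → ℝ≥0∞, (∀ s, f s ≤ 1) → ∫⁻ s in A, f s ∂ν ≠ ∞ := by
    intro f hf
    refine ((lintegral_mono hf).trans_lt ?_).ne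
    rw [lintegral_one]
    exact measure_lt_top _ _
  have key_le : ∀ B : Set S, MeasurableSet B → ρ B ≤ ∫⁻ s, P s B ∂ρ := by
    intro B hB
    have hBA : MeasurableSet (B ∩ A) := hB.inter hA
    have hρB : ρ B = μ (B ∩ A) - ν (B ∩ A) := by
      rw [hρdef, Measure.sub_apply hB hle, Measure.restrict_apply hB, Measure.restrict_apply hB]
    have e1 : μ (B ∩ A) = (∫⁻ s in A, P s (B ∩ A) ∂μ) + ∫⁻ s in Aᶜ, P s (B ∩ A) ∂μ := by
      rw [lintegral_add_compl _ hA]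
      exact hμ _ hBA
    have e2 : ν (B ∩ A) = (∫⁻ s in A, P s (B ∩ A) ∂ν) + ∫⁻ s in Aᶜ, P s (B ∩ A) ∂ν := by
      rw [lintegral_add_compl _ hA]
      exact hν _ hBA
    have hy : ∫⁻ s in Aᶜ, P s (B ∩ A) ∂μ ≤ ∫⁻ s in Aᶜ, P s (B ∩ A) ∂ν :=
      lintegral_mono' hle' le_rfl
    have hxρ : (∫⁻ s in A, P s (B ∩ A) ∂μ)
        = (∫⁻ s, P s (B ∩ A) ∂ρ) + ∫⁻ s in A, P s (B ∩ A) ∂ν := hint _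
    have hxfin : ∫⁻ s in A, P s (B ∩ A) ∂ν ≠ ∞ := hfinA _ fun s => prob_le_one
    have hxsub : (∫⁻ s in A, P s (B ∩ A) ∂μ) - ∫⁻ s in A, P s (B ∩ A) ∂ν
        = ∫⁻ s, P s (B ∩ A) ∂ρ := by
      rw [hxρ, ENNReal.add_sub_cancel_right hxfin]
    calc ρ B = μ (B ∩ A) - ν (B ∩ A) := hρB
      _ = ((∫⁻ s in A, P s (B ∩ A) ∂μ) + ∫⁻ s in Aᶜ, P s (B ∩ A) ∂μ)
          - ((∫⁻ s in A, P s (B ∩ A) ∂ν) + ∫⁻ s in Aᶜ, P s (B ∩ A) ∂ν) := by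
          rw [← e1, ← e2]
      _ ≤ (∫⁻ s in A, P s (B ∩ A) ∂μ) - ∫⁻ s in A, P s (B ∩ A) ∂ν := by
          refine tsub_le_iff_right.mpr ?_
          calc (∫⁻ s in A, P s (B ∩ A) ∂μ) + ∫⁻ s in Aᶜ, P s (B ∩ A) ∂μ
              ≤ (∫⁻ s in A, P s (B ∩ A) ∂μ) + ∫⁻ s in Aᶜ, P s (B ∩ A) ∂ν :=
                add_le_add_right hy _
            _ ≤ ((∫⁻ s in A, P s (B ∩ A) ∂μ) - ∫⁻ s in A, P s (B ∩ A) ∂ν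
                  + ∫⁻ s in A, P s (B ∩ A) ∂ν) + ∫⁻ s in Aᶜ, P s (B ∩ A) ∂ν :=
                add_le_add_left le_tsub_add _
            _ = (∫⁻ s in A, P s (B ∩ A) ∂μ) - (∫⁻ s in A, P s (B ∩ A) ∂ν)
                  + ((∫⁻ s in A, P s (B ∩ A) ∂ν) + ∫⁻ s in Aᶜ, P s (B ∩ A) ∂ν) := by
                rw [add_assoc]
      _ = ∫⁻ s, P s (B ∩ A) ∂ρ := hxsub
      _ ≤ ∫⁻ s, P s B ∂ρ :=
          lintegral_mono fun s => measure_mono Set.inter_subset_left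
  intro B hB
  have h1 := key_le B hB
  have h2 := key_le Bᶜ hB.compl
  have hρfin : IsFiniteMeasure ρ := Measure.isFiniteMeasure_sub
  have hsum1 : ρ B + ρ Bᶜ = ρ Set.univ := measure_add_measure_compl hB
  have hsum2 : (∫⁻ s, P s B ∂ρ) + ∫⁻ s, P s Bᶜ ∂ρ = ρ Set.univ := by
    rw [← lintegral_add_left (hPB B hB)]
    have : ∀ s, P s B + P s Bᶜ = 1 := fun s =>
      (measure_add_measure_compl hB).trans measure_univ
    simp only [this]
    rw [lintegral_one]
  have hdfin : ∫⁻ s, P s Bᶜ ∂ρ ≠ ∞ := by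
    refine ((lintegral_mono fun s => prob_le_one).trans_lt ?_).ne
    rw [lintegral_one]
    exact measure_lt_top _ _
  exact (ennreal_eq_of_add h1 h2 (hsum2.trans hsum1.symm) hdfin).symm

end Aux

/-- on a compact metric space, if a strong Feller Markov kernel `P` is
topologically irreducible (for every state `s` and nonempty open set `O` there is `n ≥ 1`
with `P^n(s, O) > 0`), then any two invariant probability measures coincide. -/
theorem stmt_14
    {S : Type*} [MetricSpace S] [CompactSpace S] [MeasurableSpace S] [BorelSpace S]
    (P : S → Measure S) (hP : Measurable P) [∀ s, IsProbabilityMeasure (P s)]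
    (hSF : ∀ f : S → ℝ, Measurable f → (∃ M, ∀ x, |f x| ≤ M) →
      Continuous fun s => ∫ x, f x ∂(P s))
    (hirr : ∀ s : S, ∀ O : Set S, IsOpen O → O.Nonempty →
      ∃ n : ℕ, 1 ≤ n ∧ 0 < kernelIter P n s O)
    (μ₁ μ₂ : Measure S) [IsProbabilityMeasure μ₁] [IsProbabilityMeasure μ₂]
    (hμ₁ : ∀ A : Set S, MeasurableSet A → μ₁ A = ∫⁻ s, P s A ∂μ₁)
    (hμ₂ : ∀ A : Set S, MeasurableSet A → μ₂ A = ∫⁻ s, P s A ∂μ₂) :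
    μ₁ = μ₂ := by
  by_contra hne
  have hPB : ∀ (B : Set S), MeasurableSet B → Measurable fun s => P s B := fun B hB =>
    (Measure.measurable_coe hB).comp hP
  -- Hahn decomposition for μ₁, μ₂
  obtain ⟨A, hA, hA1, hA2⟩ := hahn_decomposition (μ := μ₁) (ν := μ₂)
  have hres1 : μ₂.restrict A ≤ μ₁.restrict A := by
    refine Measure.le_iff.mpr fun t ht => ?_
    rw [Measure.restrict_apply ht, Measure.restrict_apply ht]
    exact hA1 _ (ht.inter hA) Set.inter_subset_right
  have hres2 : μ₁.restrict Aᶜ ≤ μ₂.restrict Aᶜ := by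
    refine Measure.le_iff.mpr fun t ht => ?_
    rw [Measure.restrict_apply ht, Measure.restrict_apply ht]
    exact hA2 _ (ht.inter hA.compl) Set.inter_subset_right
  -- μ₂ A < μ₁ A, since otherwise μ₁ = μ₂
  have hAgt : μ₂ A < μ₁ A := by
    rcases lt_or_eq_of_le (hA1 A hA subset_rfl) with h | h
    · exact h
    · exfalso
      apply hne
      have hcA : μ₁ Aᶜ = μ₂ Aᶜ := by
        rw [measure_compl hA (measure_ne_top _ _), measure_compl hA (measure_ne_top _ _),
          measure_univ, measure_univ, h]
      refine Measure.ext fun B hB => ?_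
      have onA : μ₁ (A ∩ B) = μ₂ (A ∩ B) := by
        refine ennreal_eq_of_add (hA1 _ (hA.inter hB) Set.inter_subset_left)
          (hA1 _ (hA.diff hB) Set.diff_subset) ?_ (measure_ne_top _ _)
        rw [measure_inter_add_diff A hB, measure_inter_add_diff A hB, h]
      have onAc : μ₂ (Aᶜ ∩ B) = μ₁ (Aᶜ ∩ B) := by
        refine ennreal_eq_of_add (hA2 _ (hA.compl.inter hB) Set.inter_subset_left)
          (hA2 _ (hA.compl.diff hB) Set.diff_subset) ?_ (measure_ne_top _ _)
        rw [measure_inter_add_diff Aᶜ hB, measure_inter_add_diff Aᶜ hB, hcA]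
      calc μ₁ B = μ₁ (B ∩ A) + μ₁ (B \ A) := (measure_inter_add_diff B hA).symm
        _ = μ₂ (B ∩ A) + μ₂ (B \ A) := by
            rw [Set.inter_comm B A, Set.diff_eq, Set.inter_comm B Aᶜ, onA, onAc]
        _ = μ₂ B := measure_inter_add_diff B hA
  -- the positive and negative parts
  set ρp := μ₁.restrict A - μ₂.restrict A with hρp
  set ρm := μ₂.restrict Aᶜ - μ₁.restrict Aᶜ with hρm
  have hρpinv : ∀ B : Set S, MeasurableSet B → ρp B = ∫⁻ s, P s B ∂ρp :=
    aux_pos P hP μ₁ μ₂ hμ₁ hμ₂ A hA hres1 hres2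
  have hρminv : ∀ B : Set S, MeasurableSet B → ρm B = ∫⁻ s, P s B ∂ρm := by
    have h2' : μ₂.restrict Aᶜᶜ ≤ μ₁.restrict Aᶜᶜ := by rwa [compl_compl]
    exact aux_pos P hP μ₂ μ₁ hμ₂ hμ₁ Aᶜ hA.compl hres2 h2'
  have hρpfin : IsFiniteMeasure ρp := Measure.isFiniteMeasure_sub
  have hρmfin : IsFiniteMeasure ρm := Measure.isFiniteMeasure_sub
  have hρpA : ρp Set.univ = μ₁ A - μ₂ A := by
    rw [hρp, Measure.sub_apply MeasurableSet.univ hres1, Measure.restrict_apply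
      MeasurableSet.univ, Measure.restrict_apply MeasurableSet.univ, Set.univ_inter]
  have hρmA : ρm Set.univ = μ₂ Aᶜ - μ₁ Aᶜ := by
    rw [hρm, Measure.sub_apply MeasurableSet.univ hres2, Measure.restrict_apply
      MeasurableSet.univ, Measure.restrict_apply MeasurableSet.univ, Set.univ_inter]
  have hρp0 : ρp Set.univ ≠ 0 := by
    rw [hρpA]
    exact (tsub_pos_of_lt hAgt).ne'
  have hρm0 : ρm Set.univ ≠ 0 := by
    rw [hρmA]
    have : μ₁ Aᶜ < μ₂ Aᶜ := by
      by_contra hnot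
      have hle : μ₂ Aᶜ ≤ μ₁ Aᶜ := not_lt.mp hnot
      have : μ₂ A + μ₂ Aᶜ < μ₁ A + μ₁ Aᶜ :=
        ENNReal.add_lt_add_of_lt_of_le (measure_ne_top _ _) hAgt hle
      rw [measure_add_measure_compl hA, measure_add_measure_compl hA,
        measure_univ, measure_univ] at this
      exact lt_irrefl _ this
    exact (tsub_pos_of_lt this).ne'
  -- key integral identity: y₁ = y₂
  have hPle1 : ∀ s, P s A ≤ 1 := fun s => prob_le_one
  have hPAm : Measurable fun s => P s A := hPB A hA
  have hfinres : ∀ (κ : Measure S), IsFiniteMeasure κ → ∀ t : Set S,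
      ∫⁻ s in t, P s A ∂κ ≠ ∞ := by
    intro κ hκ t
    refine ((lintegral_mono fun s => hPle1 s).trans_lt ?_).ne
    rw [lintegral_one]
    exact measure_lt_top _ _
  have e1 : μ₁ A = (∫⁻ s in A, P s A ∂μ₁) + ∫⁻ s in Aᶜ, P s A ∂μ₁ := by
    rw [lintegral_add_compl _ hA]; exact hμ₁ A hA
  have e2 : μ₂ A = (∫⁻ s in A, P s A ∂μ₂) + ∫⁻ s in Aᶜ, P s A ∂μ₂ := by
    rw [lintegral_add_compl _ hA]; exact hμ₂ A hA
  have hsubint : ∀ (κ : Measure S), IsFiniteMeasure κ →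
      ∫⁻ s in A, (1 - P s A) ∂κ = κ A - ∫⁻ s in A, P s A ∂κ := by
    intro κ hκ
    rw [lintegral_sub hPAm (hfinres κ hκ A) (Filter.Eventually.of_forall hPle1),
      setLIntegral_one]
  have ha1 : ∫⁻ s in A, (1 - P s A) ∂μ₁ = ∫⁻ s in Aᶜ, P s A ∂μ₁ := by
    rw [hsubint μ₁ inferInstance, e1, ENNReal.add_sub_cancel_left (hfinres μ₁ inferInstance A)]
  have ha2 : ∫⁻ s in A, (1 - P s A) ∂μ₂ = ∫⁻ s in Aᶜ, P s A ∂μ₂ := by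
    rw [hsubint μ₂ inferInstance, e2, ENNReal.add_sub_cancel_left (hfinres μ₂ inferInstance A)]
  have hyeq : ∫⁻ s in Aᶜ, P s A ∂μ₁ = ∫⁻ s in Aᶜ, P s A ∂μ₂ := by
    refine le_antisymm (lintegral_mono' hres2 le_rfl) ?_
    rw [← ha1, ← ha2]
    exact lintegral_mono' hres1 le_rfl
  -- ∫ (1 - P s A) dρp = 0
  have hsump : ρp + μ₂.restrict A = μ₁.restrict A := Measure.sub_add_cancel_of_le hres1
  have hsumm : ρm + μ₁.restrict Aᶜ = μ₂.restrict Aᶜ := Measure.sub_add_cancel_of_le hres2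
  have hZ : ∫⁻ s, (1 - P s A) ∂ρp = 0 := by
    have hdec : ∫⁻ s in A, (1 - P s A) ∂μ₁
        = (∫⁻ s, (1 - P s A) ∂ρp) + ∫⁻ s in A, (1 - P s A) ∂μ₂ := by
      rw [← hsump, lintegral_add_measure]
    have hbfin : ∫⁻ s in A, (1 - P s A) ∂μ₂ ≠ ∞ := by
      refine ((lintegral_mono fun s => tsub_le_self.trans le_rfl).trans_lt ?_).ne
      rw [lintegral_one]; exact measure_lt_top _ _
    have : (∫⁻ s, (1 - P s A) ∂ρp) + ∫⁻ s in A, (1 - P s A) ∂μ₂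
        = 0 + ∫⁻ s in A, (1 - P s A) ∂μ₂ := by
      rw [← hdec, zero_add, ha1, ha2, hyeq]
    exact (ENNReal.add_left_inj hbfin).mp this
  have hW : ∫⁻ s, P s A ∂ρm = 0 := by
    have hdec : ∫⁻ s in Aᶜ, P s A ∂μ₂ = (∫⁻ s, P s A ∂ρm) + ∫⁻ s in Aᶜ, P s A ∂μ₁ := by
      rw [← hsumm, lintegral_add_measure]
    have : (∫⁻ s, P s A ∂ρm) + ∫⁻ s in Aᶜ, P s A ∂μ₁ = 0 + ∫⁻ s in Aᶜ, P s A ∂μ₁ := by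
      rw [← hdec, zero_add, hyeq]
    exact (ENNReal.add_left_inj (hfinres μ₁ inferInstance Aᶜ)).mp this
  -- the two a.e. null open sets
  have hU0 : ρp {s | P s A < 1} = 0 := by
    have hm : Measurable fun s => (1 : ℝ≥0∞) - P s A := measurable_const.sub hPAm
    have := (lintegral_eq_zero_iff hm).mp hZ
    have h2 : ρp {s | (1 : ℝ≥0∞) - P s A ≠ 0} = 0 := by
      simpa [Filter.EventuallyEq, ae_iff] using this
    have hset : {s | P s A < 1} = {s | (1 : ℝ≥0∞) - P s A ≠ 0} := by
      ext s
      simp [tsub_eq_zero_iff_le, lt_iff_not_ge]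
    rw [hset]; exact h2
  have hV0 : ρm {s | 0 < P s A} = 0 := by
    have := (lintegral_eq_zero_iff hPAm).mp hW
    have h2 : ρm {s | P s A ≠ 0} = 0 := by
      simpa [Filter.EventuallyEq, ae_iff] using this
    have hset : {s | 0 < P s A} = {s | P s A ≠ 0} := by
      ext s; simp [pos_iff_ne_zero]
    rw [hset]; exact h2
  -- strong Feller: continuity
  have hcont : Continuous fun s => (P s A).toReal := by
    have hb : ∃ M : ℝ, ∀ x, |A.indicator (1 : S → ℝ) x| ≤ M := by
      refine ⟨1, fun x => ?_⟩
      by_cases hx : x ∈ A <;> simp [Set.indicator_of_mem, Set.indicator_of_notMem, hx]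
    have := hSF (A.indicator 1) (measurable_one.indicator hA) hb
    simpa [integral_indicator_one hA, measureReal_def] using this
  have hUopen : IsOpen {s | P s A < 1} := by
    have : {s | P s A < 1} = (fun s => (P s A).toReal) ⁻¹' Set.Iio 1 := by
      ext s
      simp only [Set.mem_setOf_eq, Set.mem_preimage, Set.mem_Iio]
      rw [show (1 : ℝ) = (1 : ℝ≥0∞).toReal by simp]
      exact (ENNReal.toReal_lt_toReal (measure_ne_top _ _) ENNReal.one_ne_top).symm
    rw [this]
    exact isOpen_Iio.preimage hcont
  have hVopen : IsOpen {s | 0 < P s A} := by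
    have : {s | 0 < P s A} = (fun s => (P s A).toReal) ⁻¹' Set.Ioi 0 := by
      ext s
      simp only [Set.mem_setOf_eq, Set.mem_preimage, Set.mem_Ioi]
      rw [ENNReal.toReal_pos_iff]
      exact ⟨fun h => ⟨h, measure_lt_top _ _⟩, fun h => h.1⟩
    rw [this]
    exact isOpen_Ioi.preimage hcont
  -- full support kills the null open sets
  have hUempty : {s | P s A < 1} = ∅ := by
    by_contra hUne
    have hne' : {s | P s A < 1}.Nonempty := Set.nonempty_iff_ne_empty.mpr hUne
    exact aux_support P hP ρp hρp0 hρpinv _ hUopen.measurableSet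
      (fun s => hirr s _ hUopen hne') hU0
  have hVempty : {s | 0 < P s A} = ∅ := by
    by_contra hVne
    have hne' : {s | 0 < P s A}.Nonempty := Set.nonempty_iff_ne_empty.mpr hVne
    exact aux_support P hP ρm hρm0 hρminv _ hVopen.measurableSet
      (fun s => hirr s _ hVopen hne') hV0
  -- contradiction: S is nonempty
  have hSne : Nonempty S := by
    by_contra h
    rw [not_nonempty_iff] at h
    have : μ₁ Set.univ = 0 := by
      rw [Set.univ_eq_empty_iff.mpr h]; exact measure_empty
    rw [measure_univ] at this
    exact one_ne_zero this
  obtain ⟨s₀⟩ := hSne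
  have h1 : ¬ P s₀ A < 1 := by
    intro h; exact absurd (hUempty ▸ h : s₀ ∈ (∅ : Set S)) (Set.notMem_empty s₀)
  have h2 : ¬ 0 < P s₀ A := by
    intro h; exact absurd (hVempty ▸ h : s₀ ∈ (∅ : Set S)) (Set.notMem_empty s₀)
  have : P s₀ A = 0 := by
    by_contra h; exact h2 (pos_iff_ne_zero.mpr h)
  apply h1
  rw [this]
  exact zero_lt_one
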